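/- Every continuous map f : X → Y of topological spaces factors as f = g ∘ h where h : X → Q × Y is in ({ {a,b} → {*} })^l and g : Q × Y → Y (the projection) is in ({ {a,b} → {*} })^{lr}; here Q is the quasi-component quotient: Q := ∏_{φ : X → {a,b}} {a,b} with X → Q given coordinatewise by the φ's. -/
import Mathlib


/-- The Quillen lifting property `f ⧄ g` for continuous maps. -/
def HasLift {A B X Y : Type} [TopologicalSpace A] [TopologicalSpace B] [TopologicalSpace X]
    [TopologicalSpace Y] (f : C(A, B)) (g : C(X, Y)) : Prop :=
  ∀ (t : C(A, X)) (b : C(B, Y)), (∀ a, g (t a) = b (f a)) →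
    ∃ h : C(B, X), (∀ a, h (f a) = t a) ∧ (∀ x, g (h x) = b x)

/-- The unique map to the one-point space. -/
def toUnit (X : Type) [TopologicalSpace X] : C(X, PUnit) :=
  ⟨fun _ => PUnit.unit, continuous_const⟩

/-- Every continuous map `f : X → Y` factors as `f = g ∘ h` where
`h : X → Q × Y` lies in `({ {a,b} → {*} })^l` and the projection
`g : Q × Y → Y` lies in `({ {a,b} → {*} })^{lr}`; here
`Q := ∏_{φ : X → {a,b}} {a,b}` and `h` is given coordinatewise by the `φ`'s
together with `f`. -/
theorem factorisation_quasi_component {X Y : Type} [TopologicalSpace X] [TopologicalSpace Y]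
    (f : C(X, Y)) :
    ∃ h : C(X, (C(X, Bool) → Bool) × Y),
      (∀ x, h x = (fun φ : C(X, Bool) => φ x, f x)) ∧
      (∀ x, (⟨Prod.snd, continuous_snd⟩ : C((C(X, Bool) → Bool) × Y, Y)) (h x) = f x) ∧
      HasLift h (toUnit Bool) ∧
      (∀ (A B : Type) [TopologicalSpace A] [TopologicalSpace B] (u : C(A, B)),
        HasLift u (toUnit Bool) →
          HasLift u (⟨Prod.snd, continuous_snd⟩ : C((C(X, Bool) → Bool) × Y, Y))) := by
  refine ⟨⟨fun x => (fun φ : C(X, Bool) => φ x, f x),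
      (continuous_pi fun φ => φ.continuous).prodMk f.continuous⟩,
    fun x => rfl, fun x => rfl, ?_, ?_⟩
  · intro t b _
    exact ⟨⟨fun p => p.1 t, (continuous_apply t).comp continuous_fst⟩,
      fun a => rfl, fun x => rfl⟩
  · intro A B _ _ u hu t b hb
    have key : ∀ φ : C(X, Bool), ∃ e : C(B, Bool), ∀ a, e (u a) = (t a).1 φ := by
      intro φ
      obtain ⟨e, h1, -⟩ := hu ⟨fun a => (t a).1 φ,
        (continuous_apply φ).comp (continuous_fst.comp t.continuous)⟩ (toUnit B) (fun a => rfl)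
      exact ⟨e, h1⟩
    choose e he using key
    refine ⟨⟨fun x => (fun φ => e φ x, b x),
      (continuous_pi fun φ => (e φ).continuous).prodMk b.continuous⟩, ?_, fun x => rfl⟩
    intro a
    show ((fun φ => e φ (u a)), b (u a)) = t a
    refine Prod.ext (funext fun φ => he φ a) (hb a).symm
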